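/- arXiv:2007.11711 — 2 statements merged into one kernel-verified Lean document; each statement's English description precedes it below -/
import Mathlib

section
/- Let σ = diag(p₁, …, p_N) be a diagonal positive definite density matrix (p_i > 0, Σp_i = 1) on ℂ^N and let R be a Hermitian traceless matrix. Define L to be the matrix with entries L_{ij} = ((log p_i - log p_j)/(p_i - p_j))·R_{ij} for p_i ≠ p_j and L_{ij} = R_{ij}/p_i when p_i = p_j. Then Tr(σ L²) ≥ Tr(R L), with equality if and only if R commutes with σ (i.e., R_{ij} = 0 whenever p_i ≠ p_j). -/
lemma log_key {t : ℝ} (ht : 1 < t) : 2 * (t - 1) < (t + 1) * Real.log t := by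
  have key : StrictMonoOn (fun t : ℝ => Real.log t - 2*(t-1)/(t+1)) (Set.Ici 1) := by
    apply strictMonoOn_of_deriv_pos (convex_Ici 1)
    · apply ContinuousOn.sub
      · exact Real.continuousOn_log.mono (by intro x hx; simp at hx ⊢; linarith)
      · apply ContinuousOn.div (by fun_prop) (by fun_prop)
        intro x hx; simp at hx; positivity
    · intro x hx
      rw [interior_Ici] at hx
      simp only [Set.mem_Ioi] at hx
      have hx0 : (0:ℝ) < x := by linarith
      have hx1 : x + 1 ≠ 0 := by positivity
      have hd : HasDerivAt (fun t : ℝ => Real.log t - 2*(t-1)/(t+1)) (1/x - 4/(x+1)^2) x := by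
        have h1 : HasDerivAt Real.log (1/x) x := by
          simpa [one_div] using Real.hasDerivAt_log hx0.ne'
        have h2 : HasDerivAt (fun t : ℝ => 2*(t-1)/(t+1)) (4/(x+1)^2) x := by
          have := (((hasDerivAt_id x).sub_const 1).const_mul 2).div
            ((hasDerivAt_id x).add_const 1) hx1
          simp only [Pi.div_def, id] at this
          exact this.congr_deriv (by ring)
        exact h1.sub h2
      rw [hd.deriv]
      rw [sub_pos, div_lt_div_iff₀ (by positivity) hx0]
      nlinarith [sq_nonneg (x - 1)]
  have h := key (Set.self_mem_Ici) (Set.mem_Ici.mpr ht.le) ht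
  simp only [Real.log_one] at h
  have h2 : 2*(t-1)/(t+1) < Real.log t := by linarith
  rw [div_lt_iff₀ (by linarith)] at h2
  linarith

lemma key_ab {a b : ℝ} (hb : 0 < b) (hab : b < a) :
    2 * (a - b) < (a + b) * (Real.log a - Real.log b) := by
  have ha : 0 < a := lt_trans hb hab
  have ht : 1 < a / b := (one_lt_div hb).mpr hab
  have h := log_key ht
  rw [Real.log_div ha.ne' hb.ne'] at h
  have hb' : b ≠ 0 := hb.ne'
  have h2 := mul_lt_mul_of_pos_left h hb
  calc 2 * (a - b) = b * (2 * (a/b - 1)) := by field_simp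
    _ < b * ((a/b + 1) * (Real.log a - Real.log b)) := h2
    _ = (a + b) * (Real.log a - Real.log b) := by field_simp

lemma mul_star_aux (a : ℝ) (z : ℂ) :
    ((a:ℂ) * z) * ((a:ℂ) * star z) = ((a^2 * Complex.normSq z : ℝ) : ℂ) := by
  rw [Complex.star_def]
  push_cast
  rw [← Complex.mul_conj]
  ring

lemma mul_star_aux' (a : ℝ) (z : ℂ) :
    z * ((a:ℂ) * star z) = ((a * Complex.normSq z : ℝ) : ℂ) := by
  rw [Complex.star_def]
  push_cast
  rw [← Complex.mul_conj]
  ring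

open Matrix

theorem variance_ge_two_relent
    (N : ℕ) (p : Fin N → ℝ) (hp : ∀ i, 0 < p i) (hsum : ∑ i, p i = 1)
    (R : Matrix (Fin N) (Fin N) ℂ) (hR : R.IsHermitian) (htr : R.trace = 0)
    (σ : Matrix (Fin N) (Fin N) ℂ) (hσ : σ = Matrix.diagonal (fun i => (p i : ℂ)))
    (L : Matrix (Fin N) (Fin N) ℂ)
    (hL : ∀ i j, L i j =
      if p i = p j then R i j / (p i : ℂ)
      else (((Real.log (p i) - Real.log (p j)) / (p i - p j) : ℝ) : ℂ) * R i j) :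
    ((σ * L * L).trace).re ≥ ((R * L).trace).re ∧
    ((σ * L * L).trace = (R * L).trace ↔ σ * R = R * σ) := by
  set c : Fin N → Fin N → ℝ := fun i j =>
    if p i = p j then 1 / p i
    else (Real.log (p i) - Real.log (p j)) / (p i - p j)
  have hcif : ∀ i j, c i j = if p i = p j then 1 / p i
      else (Real.log (p i) - Real.log (p j)) / (p i - p j) := fun i j => rfl
  have hLc : ∀ i j, L i j = (c i j : ℂ) * R i j := by
    intro i j
    rw [hL, hcif]
    by_cases h : p i = p j
    · rw [if_pos h, if_pos h]
      push_cast
      rw [one_div, inv_mul_eq_div]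
    · rw [if_neg h, if_neg h]
  have csymm : ∀ i j, c i j = c j i := by
    intro i j
    by_cases h : p i = p j
    · rw [hcif, hcif, if_pos h, if_pos h.symm, h]
    · rw [hcif, hcif, if_neg h, if_neg (Ne.symm h), ← neg_div_neg_eq]
      ring_nf
  have cpos : ∀ i j, 0 < c i j := by
    intro i j
    rw [hcif]
    split_ifs with h
    · exact one_div_pos.mpr (hp i)
    · rcases lt_or_gt_of_ne h with hlt | hgt
      · apply div_pos_of_neg_of_neg
        · simpa using Real.log_lt_log (hp i) hlt
        · linarith
      · apply div_pos
        · simpa using Real.log_lt_log (hp j) hgt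
        · linarith
  have ckey : ∀ i j, p i ≠ p j → 1 < (p i + p j) / 2 * c i j := by
    have half : ∀ i j, p j < p i → 1 < (p i + p j) / 2 * c i j := by
      intro i j hlt
      have h := key_ab (hp j) hlt
      rw [hcif, if_neg (ne_of_gt hlt), div_mul_div_comm,
        lt_div_iff₀ (by nlinarith [hp j])]
      nlinarith
    intro i j hne
    rcases lt_or_gt_of_ne hne with hlt | hgt
    · rw [csymm, add_comm]
      exact half j i hlt
    · exact half i j hgt
  have hRji : ∀ i j, R j i = star (R i j) := fun i j => (hR.apply j i).symm
  have hnsq : ∀ i j, Complex.normSq (R j i) = Complex.normSq (R i j) := by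
    intro i j
    rw [hRji, Complex.star_def, Complex.normSq_conj]
  set f : Fin N → Fin N → ℝ := fun i j =>
    p i * (c i j)^2 * Complex.normSq (R i j) with hf
  set e : Fin N → Fin N → ℝ := fun i j =>
    c i j * Complex.normSq (R i j) with he
  have hLL : ∀ i j, L i j * L j i = (((c i j)^2 * Complex.normSq (R i j) : ℝ) : ℂ) := by
    intro i j
    rw [hLc i j, hLc j i, hRji i j, ← csymm i j]
    exact mul_star_aux _ _
  have hσL : ∀ i j, (σ * L) i j = (p i : ℂ) * L i j := by
    intro i j
    rw [hσ, Matrix.diagonal_mul]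
  have trσ : (σ * L * L).trace = ((∑ i, ∑ j, f i j : ℝ) : ℂ) := by
    push_cast
    calc (σ * L * L).trace = ∑ i, ∑ j, (σ * L) i j * L j i := by
          simp only [Matrix.trace, Matrix.diag]
          exact Finset.sum_congr rfl fun i _ => Matrix.mul_apply
      _ = ∑ i, ∑ j, ((f i j : ℝ) : ℂ) := by
          refine Finset.sum_congr rfl fun i _ => Finset.sum_congr rfl fun j _ => ?_
          rw [hσL, mul_assoc, hLL, hf]
          push_cast
          ring
  have trR : (R * L).trace = ((∑ i, ∑ j, e i j : ℝ) : ℂ) := by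
    push_cast
    calc (R * L).trace = ∑ i, ∑ j, R i j * L j i := by
          simp only [Matrix.trace, Matrix.diag]
          exact Finset.sum_congr rfl fun i _ => Matrix.mul_apply
      _ = ∑ i, ∑ j, ((e i j : ℝ) : ℂ) := by
          refine Finset.sum_congr rfl fun i _ => Finset.sum_congr rfl fun j _ => ?_
          rw [hLc j i, hRji i j, ← csymm i j, mul_star_aux', he]
  set g : Fin N → Fin N → ℝ := fun i j =>
    ((p i + p j)/2 * (c i j)^2 - c i j) * Complex.normSq (R i j) with hg
  have hgnonneg : ∀ i j, 0 ≤ g i j := by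
    intro i j
    simp only [hg]
    by_cases h : p i = p j
    · have : (p i + p j)/2 * (c i j)^2 - c i j = 0 := by
        rw [hcif, if_pos h, ← h]
        have := (hp i).ne'
        field_simp
        ring
      rw [this, zero_mul]
    · have h1 : 0 < (p i + p j)/2 * (c i j)^2 - c i j := by
        have := ckey i j h
        have := cpos i j
        nlinarith
      exact mul_nonneg h1.le (Complex.normSq_nonneg _)
  have hgzero : ∀ i j, p i ≠ p j → g i j = 0 → R i j = 0 := by
    intro i j h hz
    simp only [hg] at hz
    have h1 : 0 < (p i + p j)/2 * (c i j)^2 - c i j := by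
      have := ckey i j h
      have := cpos i j
      nlinarith
    have h2 : Complex.normSq (R i j) = 0 := by
      rcases mul_eq_zero.mp hz with h' | h'
      · exact absurd h' (ne_of_gt h1)
      · exact h'
    exact Complex.normSq_eq_zero.mp h2
  have hfe : ∑ i, ∑ j, f i j - ∑ i, ∑ j, e i j = ∑ i, ∑ j, g i j := by
    have h1 : ∑ i, ∑ j, (f j i - e j i) = ∑ i, ∑ j, (f i j - e i j) :=
      Finset.sum_comm
    have h2 : ∀ i j, (f i j - e i j) + (f j i - e j i) = 2 * g i j := by
      intro i j
      rw [hf, he, hg]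
      simp only
      rw [← csymm i j, hnsq i j]
      ring
    have h3 : (2:ℝ) * (∑ i, ∑ j, (f i j - e i j)) = 2 * ∑ i, ∑ j, g i j := by
      calc (2:ℝ) * (∑ i, ∑ j, (f i j - e i j))
          = ∑ i, ∑ j, (f i j - e i j) + ∑ i, ∑ j, (f j i - e j i) := by rw [h1]; ring
        _ = ∑ i, ∑ j, ((f i j - e i j) + (f j i - e j i)) := by
            rw [← Finset.sum_add_distrib]
            exact Finset.sum_congr rfl fun i _ => (Finset.sum_add_distrib).symm
        _ = ∑ i, ∑ j, 2 * g i j := by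
            exact Finset.sum_congr rfl fun i _ => Finset.sum_congr rfl fun j _ => h2 i j
        _ = 2 * ∑ i, ∑ j, g i j := by
            rw [Finset.mul_sum]
            exact Finset.sum_congr rfl fun i _ => (Finset.mul_sum _ _ _).symm
    have h4 : ∑ i, ∑ j, (f i j - e i j) = ∑ i, ∑ j, f i j - ∑ i, ∑ j, e i j := by
      rw [← Finset.sum_sub_distrib]
      exact Finset.sum_congr rfl fun i _ => Finset.sum_sub_distrib _ _
    linarith
  have hgsum : 0 ≤ ∑ i, ∑ j, g i j :=
    Finset.sum_nonneg fun i _ => Finset.sum_nonneg fun j _ => hgnonneg i j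
  constructor
  · rw [trσ, trR, Complex.ofReal_re, Complex.ofReal_re]
    linarith
  · constructor
    · intro heq
      rw [trσ, trR, Complex.ofReal_inj] at heq
      have hzero : ∑ i, ∑ j, g i j = 0 := by linarith
      have hall : ∀ i j, g i j = 0 := by
        intro i j
        have h1 := (Finset.sum_eq_zero_iff_of_nonneg
          (fun i _ => Finset.sum_nonneg fun j _ => hgnonneg i j)).mp hzero i
          (Finset.mem_univ i)
        exact (Finset.sum_eq_zero_iff_of_nonneg
          (fun j _ => hgnonneg i j)).mp h1 j (Finset.mem_univ j)
      ext i j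
      rw [hσ, Matrix.diagonal_mul, Matrix.mul_diagonal]
      by_cases h : p i = p j
      · rw [h]; ring
      · rw [hgzero i j h (hall i j)]; ring
    · intro hcomm
      have hR0 : ∀ i j, p i ≠ p j → R i j = 0 := by
        intro i j h
        have := congrFun (congrFun hcomm i) j
        rw [hσ, Matrix.diagonal_mul, Matrix.mul_diagonal] at this
        have hne : (p i : ℂ) ≠ (p j : ℂ) := by
          exact_mod_cast h
        have : ((p i : ℂ) - (p j : ℂ)) * R i j = 0 := by
          rw [sub_mul]
          rw [mul_comm (R i j) ((p j : ℂ))] at this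
          linear_combination this
        rcases mul_eq_zero.mp this with h' | h'
        · exact absurd (sub_eq_zero.mp h') hne
        · exact h'
      have : ∀ i j, f i j = e i j := by
        intro i j
        by_cases h : p i = p j
        · rw [hf, he]
          simp only
          rw [hcif, if_pos h]
          have := (hp i).ne'
          field_simp
        · rw [hf, he]
          simp only
          rw [hR0 i j h]
          simp
      rw [trσ, trR]
      norm_cast
      exact Finset.sum_congr rfl fun i _ => Finset.sum_congr rfl fun j _ => this i j
end

section
/- With σ, R, L as above, define additionally F = Tr(R·L_sym) where L_sym has entries (L_sym)_{ij} = 2 R_{ij}/(p_i + p_j). Then F ≤ Tr(R L), with equality if and only if R commutes with σ. -/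
open Matrix

private lemma log_mean_aux (t : ℝ) (ht : 1 < t) : 2*(t-1)/(t+1) < Real.log t := by
  have hmono : StrictMonoOn (fun x : ℝ => Real.log x + 4 * (x+1)⁻¹) (Set.Ici 1) := by
    have hd : ∀ x ∈ Set.Ici (1:ℝ), HasDerivAt (fun x : ℝ => Real.log x + 4 * (x+1)⁻¹)
        (x⁻¹ + 4 * (-1 / (x+1)^2)) x := by
      intro x hx
      have hx0 : (0:ℝ) < x := lt_of_lt_of_le one_pos hx
      have h1 : HasDerivAt (fun x : ℝ => x + 1) 1 x := (hasDerivAt_id x).add_const 1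
      have h2 : HasDerivAt (fun x : ℝ => (x+1)⁻¹) (-1/(x+1)^2) x := by
        simpa [Pi.inv_def] using h1.inv (by positivity)
      exact (Real.hasDerivAt_log hx0.ne').add (h2.const_mul 4)
    apply strictMonoOn_of_deriv_pos (convex_Ici 1)
    · intro x hx
      exact (hd x hx).continuousAt.continuousWithinAt
    · intro x hx
      rw [interior_Ici] at hx
      have hx1 : (1:ℝ) < x := hx
      rw [(hd x (le_of_lt hx1)).deriv]
      have hx0 : (0:ℝ) < x := lt_trans one_pos hx1
      have hrw : x⁻¹ + 4 * (-1/(x+1)^2) = (x-1)^2 / (x * (x+1)^2) := by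
        field_simp
        ring
      rw [hrw]
      apply div_pos (by nlinarith) (by positivity)
  have h := hmono (Set.self_mem_Ici) (le_of_lt ht) ht
  simp only [Real.log_one] at h
  have ht1 : (0:ℝ) < t + 1 := by linarith
  have hrw : 2*(t-1)/(t+1) = 2 - 4*(t+1)⁻¹ := by
    field_simp
    ring
  have h2 : (0:ℝ) + 4 * ((1:ℝ)+1)⁻¹ = 2 := by norm_num
  rw [hrw]
  rw [h2] at h
  linarith

private lemma log_mean (a b : ℝ) (hb : 0 < b) (hab : b < a) :
    2/(a+b) < (Real.log a - Real.log b)/(a-b) := by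
  have ha : 0 < a := lt_trans hb hab
  have ht : 1 < a / b := (one_lt_div hb).2 hab
  have key := log_mean_aux (a/b) ht
  have hrw : 2*(a/b-1)/(a/b+1) = 2*(a-b)/(a+b) := by
    rw [div_eq_div_iff (by positivity) (by positivity)]
    field_simp
  rw [hrw, Real.log_div ha.ne' hb.ne'] at key
  rw [div_lt_div_iff₀ (by linarith) (by linarith)]
  rw [div_lt_iff₀ (by linarith)] at key
  linarith

private lemma coeff_lt (a b : ℝ) (ha : 0 < a) (hb : 0 < b) (h : a ≠ b) :
    2/(a+b) < (Real.log a - Real.log b)/(a-b) := by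
  rcases h.lt_or_gt with hlt | hlt
  · have key := log_mean b a ha hlt
    have e1 : (Real.log b - Real.log a)/(b-a) = (Real.log a - Real.log b)/(a-b) := by
      rw [show b - a = -(a-b) by ring, show Real.log b - Real.log a
          = -(Real.log a - Real.log b) by ring, neg_div_neg_eq]
    rw [e1, add_comm b a] at key
    exact key
  · exact log_mean a b hb hlt

theorem fisher_le_relent
    (N : ℕ) (p : Fin N → ℝ) (hp : ∀ i, 0 < p i) (hsum : ∑ i, p i = 1)
    (R : Matrix (Fin N) (Fin N) ℂ) (hR : R.IsHermitian) (htr : R.trace = 0)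
    (σ : Matrix (Fin N) (Fin N) ℂ) (hσ : σ = Matrix.diagonal (fun i => (p i : ℂ)))
    (L Lsym : Matrix (Fin N) (Fin N) ℂ)
    (hL : ∀ i j, L i j =
      if p i = p j then R i j / (p i : ℂ)
      else (((Real.log (p i) - Real.log (p j)) / (p i - p j) : ℝ) : ℂ) * R i j)
    (hLsym : ∀ i j, Lsym i j = 2 * R i j / ((p i + p j : ℝ) : ℂ)) :
    ((R * Lsym).trace).re ≤ ((R * L).trace).re ∧
    ((R * Lsym).trace = (R * L).trace ↔ σ * R = R * σ) := by
  subst hσ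
  set cL : Fin N → Fin N → ℝ := fun i j =>
    if p i = p j then 1 / p i else (Real.log (p i) - Real.log (p j)) / (p i - p j) with hcL
  set cS : Fin N → Fin N → ℝ := fun i j => 2 / (p i + p j) with hcS
  set n : Fin N → Fin N → ℝ := fun i j => Complex.normSq (R i j) with hn
  have hpij : ∀ i j : Fin N, (0:ℝ) < p i + p j := fun i j => by
    have := hp i; have := hp j; linarith
  -- entrywise forms
  have hLc : ∀ i j, L i j = ((cL i j : ℝ) : ℂ) * R i j := by
    intro i j
    rw [hL i j]
    change _ = ((if p i = p j then 1 / p i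
        else (Real.log (p i) - Real.log (p j)) / (p i - p j) : ℝ) : ℂ) * R i j
    by_cases h : p i = p j
    · rw [if_pos h, if_pos h]
      push_cast
      ring
    · rw [if_neg h, if_neg h]
  have hSc : ∀ i j, Lsym i j = ((cS i j : ℝ) : ℂ) * R i j := by
    intro i j
    rw [hLsym i j]
    change _ = ((2 / (p i + p j) : ℝ) : ℂ) * R i j
    push_cast
    ring
  -- trace formula
  have htrace : ∀ (M : Matrix (Fin N) (Fin N) ℂ) (c : Fin N → Fin N → ℝ),
      (∀ i j, M i j = ((c i j : ℝ) : ℂ) * R i j) →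
      (R * M).trace = ((∑ i, ∑ j, c j i * n i j : ℝ) : ℂ) := by
    intro M c hM
    have hentry : ∀ i j : Fin N, R i j * M j i
        = ((c j i : ℝ) : ℂ) * ((n i j : ℝ) : ℂ) := by
      intro i j
      rw [hM j i, ← hR.apply j i]
      rw [show R i j * (((c j i : ℝ) : ℂ) * star (R i j))
          = ((c j i : ℝ) : ℂ) * (R i j * star (R i j)) from by ring]
      rw [Complex.star_def, Complex.mul_conj]
    simp only [Matrix.trace, Matrix.diag, Matrix.mul_apply]
    push_cast
    exact Finset.sum_congr rfl fun i _ => Finset.sum_congr rfl fun j _ => hentry i j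
  have hTL := htrace L cL hLc
  have hTS := htrace Lsym cS hSc
  -- scalar comparisons
  have hle : ∀ i j : Fin N, cS j i ≤ cL j i := by
    intro i j
    change 2 / (p j + p i) ≤ if p j = p i then 1 / p j
      else (Real.log (p j) - Real.log (p i)) / (p j - p i)
    by_cases h : p j = p i
    · rw [if_pos h, h]
      rw [show p i + p i = 2 * p i by ring]
      rw [div_le_div_iff₀ (by have := hp i; linarith) (hp i)]
      linarith
    · rw [if_neg h]
      exact le_of_lt (coeff_lt (p j) (p i) (hp j) (hp i) h)
  have hlt : ∀ i j : Fin N, p j ≠ p i → cS j i < cL j i := by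
    intro i j h
    change 2 / (p j + p i) < if p j = p i then 1 / p j
      else (Real.log (p j) - Real.log (p i)) / (p j - p i)
    rw [if_neg h]
    exact coeff_lt (p j) (p i) (hp j) (hp i) h
  have hn0 : ∀ i j, 0 ≤ n i j := fun i j => Complex.normSq_nonneg _
  have hterm_le : ∀ i j : Fin N, cS j i * n i j ≤ cL j i * n i j :=
    fun i j => mul_le_mul_of_nonneg_right (hle i j) (hn0 i j)
  have hinner_le : ∀ i : Fin N, (∑ j, cS j i * n i j) ≤ ∑ j, cL j i * n i j :=
    fun i => Finset.sum_le_sum fun j _ => hterm_le i j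
  have hsum_le : (∑ i, ∑ j, cS j i * n i j) ≤ ∑ i, ∑ j, cL j i * n i j :=
    Finset.sum_le_sum fun i _ => hinner_le i
  constructor
  · rw [hTL, hTS, Complex.ofReal_re, Complex.ofReal_re]
    exact hsum_le
  · rw [hTL, hTS, Complex.ofReal_inj]
    constructor
    · intro heq
      have hvanish : ∀ i j : Fin N, p i ≠ p j → R i j = 0 := by
        intro i j hne
        by_contra hR0
        have hnpos : 0 < n i j := by
          rcases lt_or_eq_of_le (hn0 i j) with h | h
          · exact h
          · exact absurd (Complex.normSq_eq_zero.1 h.symm) hR0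
        have hstrict : (∑ i, ∑ j, cS j i * n i j) < ∑ i, ∑ j, cL j i * n i j := by
          refine Finset.sum_lt_sum (fun i _ => hinner_le i) ⟨i, Finset.mem_univ i, ?_⟩
          refine Finset.sum_lt_sum (fun j _ => hterm_le i j) ⟨j, Finset.mem_univ j, ?_⟩
          exact mul_lt_mul_of_pos_right (hlt i j fun h => hne h.symm) hnpos
        exact absurd heq (ne_of_lt hstrict)
      ext i j
      rw [Matrix.diagonal_mul, Matrix.mul_diagonal]
      by_cases h : p i = p j
      · rw [h, mul_comm]
      · rw [hvanish i j h, mul_zero, zero_mul]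
    · intro hcomm
      have hvanish : ∀ i j : Fin N, p i ≠ p j → R i j = 0 := by
        intro i j hne
        have h1 := congrFun (congrFun hcomm i) j
        rw [Matrix.diagonal_mul, Matrix.mul_diagonal] at h1
        have h2 : (((p i : ℝ) : ℂ) - ((p j : ℝ) : ℂ)) * R i j = 0 := by
          linear_combination h1
        rcases mul_eq_zero.1 h2 with h3 | h3
        · exfalso
          apply hne
          have : ((p i : ℝ) : ℂ) = ((p j : ℝ) : ℂ) := by linear_combination h3
          exact_mod_cast this
        · exact h3
      refine Finset.sum_congr rfl fun i _ => Finset.sum_congr rfl fun j _ => ?_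
      by_cases h : p j = p i
      · have hc : cS j i = cL j i := by
          change 2 / (p j + p i) = if p j = p i then 1 / p j
            else (Real.log (p j) - Real.log (p i)) / (p j - p i)
          rw [if_pos h, h]
          rw [show p i + p i = 2 * p i by ring]
          rw [div_eq_div_iff (by have := hp i; linarith) (hp i).ne']
          ring
        rw [hc]
      · have hz : n i j = 0 := by
          change Complex.normSq (R i j) = 0
          rw [hvanish i j fun hh => h hh.symm]
          simp
        rw [hz, mul_zero, mul_zero]
end
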